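/- With the explicit so(5) operators on W(p), the vacuum vector |0,0;0⟩ satisfies f_j^-|0,0;0⟩ = 0 and [f_j^-, f_k^+]|0,0;0⟩ = p δ_{jk} |0,0;0⟩ for j,k ∈ {1,2}. -/
import Mathlib

namespace StmtSO5

variable (p : ℕ)

/-- Validity of a triple `(m₁₂, m₂₂, m₁₁)`: `p ≥ m₁₂ ≥ m₁₁ ≥ m₂₂ ≥ 0`. -/
def valid (t : ℕ × ℕ × ℕ) : Prop := t.2.1 ≤ t.2.2 ∧ t.2.2 ≤ t.1 ∧ t.1 ≤ p

instance (t : ℕ × ℕ × ℕ) : Decidable (valid p t) := by unfold valid; infer_instance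

/-- The so(5) Fock space `W(p)`: the real vector space with basis the valid triples. -/
abbrev V := {t : ℕ × ℕ × ℕ // valid p t} →₀ ℝ

/-- The basis vector `|m₁₂,m₂₂;m₁₁⟩`, interpreted as `0` when the triple is out of range. -/
noncomputable def b (t : ℕ × ℕ × ℕ) : V p :=
  if h : valid p t then Finsupp.single ⟨t, h⟩ 1 else 0

/-- The inner product making the basis vectors orthonormal. -/
noncomputable def ip (u v : V p) : ℝ := u.sum fun t c => c * v t

/-- The defining matrix elements of `f₁⁺`. -/
def F1pAction (f1p : V p →ₗ[ℝ] V p) : Prop :=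
  ∀ m12 m22 m11 : ℕ, valid p (m12, m22, m11) →
    f1p (b p (m12, m22, m11)) =
      Real.sqrt (((m11 : ℝ) - m22 + 1) * ((p : ℝ) - m12)) • b p (m12 + 1, m22, m11 + 1) -
      Real.sqrt (((m12 : ℝ) - m11) * ((m22 : ℝ) + 1)) • b p (m12, m22 + 1, m11 + 1)

/-- The defining matrix elements of `f₂⁺`. -/
def F2pAction (f2p : V p →ₗ[ℝ] V p) : Prop :=
  ∀ m12 m22 m11 : ℕ, valid p (m12, m22, m11) →
    f2p (b p (m12, m22, m11)) =
      Real.sqrt (((m12 : ℝ) - m11 + 1) * ((p : ℝ) - m12)) • b p (m12 + 1, m22, m11) +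
      Real.sqrt (((m11 : ℝ) - m22) * ((m22 : ℝ) + 1)) • b p (m12, m22 + 1, m11)

/-- `g` is the adjoint (transpose with respect to the given orthonormal basis) of `f`. -/
def IsAdjoint (f g : V p →ₗ[ℝ] V p) : Prop := ∀ u v : V p, ip p (g u) v = ip p u (f v)

lemma ip_single_right (u : V p) (s : {t // valid p t}) :
    ip p u (Finsupp.single s 1) = u s := by
  classical
  unfold ip
  rw [Finsupp.sum, Finset.sum_eq_single s]
  · simp
  · intro t _ hts; simp [Finsupp.single_apply, (Ne.symm hts)]
  · intro h; simp [Finsupp.notMem_support_iff.mp h]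

lemma ip_single_left (t : {s // valid p s}) (v : V p) :
    ip p (Finsupp.single t 1) v = v t := by
  unfold ip
  rw [Finsupp.sum_single_index] <;> simp

lemma adj_apply {f g : V p →ₗ[ℝ] V p} (hfg : IsAdjoint p f g)
    (u : V p) (s : {t // valid p t}) :
    g u s = ip p u (f (b p s.val)) := by
  have hb : b p s.val = Finsupp.single s 1 := by
    rw [b, dif_pos s.2]
  rw [hb]
  have h := hfg u (Finsupp.single s 1)
  rw [ip_single_right] at h
  exact h

lemma b_apply (t : ℕ × ℕ × ℕ) (s : {u // valid p u}) :
    b p t s = if t = s.val then 1 else 0 := by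
  rcases s with ⟨sv, hs⟩
  by_cases ht : valid p t
  · simp [b, ht, Finsupp.single_apply, Subtype.ext_iff]
  · have : t ≠ sv := by rintro rfl; exact ht hs
    simp [b, ht, this]

/-- with the explicit so(5) operators on `W(p)`, the vacuum `|0,0;0⟩`
satisfies `f_j^-|0,0;0⟩ = 0` and `[f_j^-, f_k^+]|0,0;0⟩ = p δ_{jk} |0,0;0⟩` for
`j,k ∈ {1,2}`. -/
theorem so5_vacuum_relations (hp : 0 < p)
    (f1p f2p f1m f2m : V p →ₗ[ℝ] V p)
    (h1 : F1pAction p f1p) (h2 : F2pAction p f2p)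
    (h1m : IsAdjoint p f1p f1m) (h2m : IsAdjoint p f2p f2m) :
    let v0 : V p := b p (0, 0, 0)
    f1m v0 = 0 ∧ f2m v0 = 0 ∧
    f1m (f1p v0) - f1p (f1m v0) = (p : ℝ) • v0 ∧
    f2m (f2p v0) - f2p (f2m v0) = (p : ℝ) • v0 ∧
    f1m (f2p v0) - f2p (f1m v0) = 0 ∧
    f2m (f1p v0) - f1p (f2m v0) = 0 := by
  have h000 : valid p (0, 0, 0) := ⟨le_refl 0, le_refl 0, Nat.zero_le p⟩
  have h101 : valid p (1, 0, 1) := ⟨Nat.zero_le 1, le_refl 1, hp⟩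
  have h100 : valid p (1, 0, 0) := ⟨le_refl 0, Nat.zero_le 1, hp⟩
  have hb000 : b p (0, 0, 0) = Finsupp.single ⟨(0, 0, 0), h000⟩ 1 := by
    rw [b, dif_pos h000]
  have hb101 : b p (1, 0, 1) = Finsupp.single ⟨(1, 0, 1), h101⟩ 1 := by
    rw [b, dif_pos h101]
  have hb100 : b p (1, 0, 0) = Finsupp.single ⟨(1, 0, 0), h100⟩ 1 := by
    rw [b, dif_pos h100]
  -- f1m kills the vacuum
  have A1 : f1m (b p (0, 0, 0)) = 0 := by
    ext s
    rw [adj_apply p h1m, hb000, ip_single_left]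
    obtain ⟨⟨m12, m22, m11⟩, hs⟩ := s
    rw [h1 m12 m22 m11 hs]
    simp [b_apply, Prod.ext_iff]
  -- f2m kills the vacuum
  have A2 : f2m (b p (0, 0, 0)) = 0 := by
    ext s
    rw [adj_apply p h2m, hb000, ip_single_left]
    obtain ⟨⟨m12, m22, m11⟩, hs⟩ := s
    rw [h2 m12 m22 m11 hs]
    simp [b_apply, Prod.ext_iff]
  -- action of the raising operators on the vacuum
  have B1 : f1p (b p (0, 0, 0)) = Real.sqrt p • b p (1, 0, 1) := by
    rw [h1 0 0 0 h000]
    norm_num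
  have B2 : f2p (b p (0, 0, 0)) = Real.sqrt p • b p (1, 0, 0) := by
    rw [h2 0 0 0 h000]
    norm_num
  -- action of the lowering operators one level up
  have C1 : f1m (b p (1, 0, 1)) = Real.sqrt p • b p (0, 0, 0) := by
    ext s
    rw [adj_apply p h1m, hb101, ip_single_left]
    obtain ⟨⟨m12, m22, m11⟩, hs⟩ := s
    rw [h1 m12 m22 m11 hs]
    simp only [Finsupp.sub_apply, Finsupp.smul_apply, b_apply, smul_eq_mul, Prod.mk.injEq]
    by_cases hc : m12 = 0 ∧ m22 = 0 ∧ m11 = 0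
    · obtain ⟨rfl, rfl, rfl⟩ := hc
      norm_num
    · have e1 : ¬(m12 + 1 = 1 ∧ m22 = 0 ∧ m11 + 1 = 1) := by omega
      have e2 : ¬(m12 = 1 ∧ m22 + 1 = 0 ∧ m11 + 1 = 1) := by omega
      have e3 : ¬(0 = m12 ∧ 0 = m22 ∧ 0 = m11) := by omega
      simp [e2, e3]
      intro a b c
      exact absurd ⟨a, b, c⟩ hc
  have C2 : f2m (b p (1, 0, 0)) = Real.sqrt p • b p (0, 0, 0) := by
    ext s
    rw [adj_apply p h2m, hb100, ip_single_left]
    obtain ⟨⟨m12, m22, m11⟩, hs⟩ := s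
    rw [h2 m12 m22 m11 hs]
    simp only [Finsupp.add_apply, Finsupp.smul_apply, b_apply, smul_eq_mul, Prod.mk.injEq]
    by_cases hc : m12 = 0 ∧ m22 = 0 ∧ m11 = 0
    · obtain ⟨rfl, rfl, rfl⟩ := hc
      norm_num
    · have e1 : ¬(m12 + 1 = 1 ∧ m22 = 0 ∧ m11 = 0) := by omega
      have e2 : ¬(m12 = 1 ∧ m22 + 1 = 0 ∧ m11 = 0) := by omega
      have e3 : ¬(0 = m12 ∧ 0 = m22 ∧ 0 = m11) := by omega
      simp [e2, e3]
      intro a b c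
      exact absurd ⟨a, b, c⟩ hc
  -- cross terms vanish
  have D1 : f1m (b p (1, 0, 0)) = 0 := by
    ext s
    rw [adj_apply p h1m, hb100, ip_single_left]
    obtain ⟨⟨m12, m22, m11⟩, hs⟩ := s
    rw [h1 m12 m22 m11 hs]
    simp [b_apply, Prod.ext_iff]
  have D2 : f2m (b p (1, 0, 1)) = 0 := by
    ext s
    rw [adj_apply p h2m, hb101, ip_single_left]
    obtain ⟨⟨m12, m22, m11⟩, hs⟩ := s
    have hv2 : m11 ≤ m12 := hs.2.1
    rw [h2 m12 m22 m11 hs]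
    simp only [Finsupp.add_apply, Finsupp.smul_apply, b_apply, smul_eq_mul, Prod.mk.injEq]
    have e1 : ¬(m12 + 1 = 1 ∧ m22 = 0 ∧ m11 = 1) := by omega
    have e2 : ¬(m12 = 1 ∧ m22 + 1 = 0 ∧ m11 = 1) := by omega
    simp [e2]
    intro a b c
    omega
  have sq : Real.sqrt p * Real.sqrt p = (p : ℝ) :=
    Real.mul_self_sqrt (Nat.cast_nonneg p)
  intro v0
  refine ⟨A1, A2, ?_, ?_, ?_, ?_⟩
  · show f1m (f1p (b p (0, 0, 0))) - f1p (f1m (b p (0, 0, 0))) = (p : ℝ) • b p (0, 0, 0)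
    rw [A1, map_zero, sub_zero, B1, map_smul, C1, smul_smul, sq]
  · show f2m (f2p (b p (0, 0, 0))) - f2p (f2m (b p (0, 0, 0))) = (p : ℝ) • b p (0, 0, 0)
    rw [A2, map_zero, sub_zero, B2, map_smul, C2, smul_smul, sq]
  · show f1m (f2p (b p (0, 0, 0))) - f2p (f1m (b p (0, 0, 0))) = 0
    rw [A1, map_zero, sub_zero, B2, map_smul, D1, smul_zero]
  · show f2m (f1p (b p (0, 0, 0))) - f1p (f2m (b p (0, 0, 0))) = 0
    rw [A2, map_zero, sub_zero, B1, map_smul, D2, smul_zero]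

end StmtSO5
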